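/- For every natural number k and every vertex v of the action graph A_k, there is exactly one directed path in A_k from the vertex labeled 0 to v. -/

import Mathlib

/-- Vertices of action graphs: the root (labeled 0), or a vertex created at some
step, recorded together with its label and the path (head and tail of the vertex
sequence) that created it. -/
inductive AGVert : Type
  | root : AGVert
  | node (lbl : ℕ) (head : AGVert) (tail : List AGVert) : AGVert

/-- The label of a vertex. -/
def AGVert.label : AGVert → ℕ
  | .root => 0
  | .node l _ _ => l

/-- `IsPath E a l` says that `a :: l` is the vertex sequence of a directed path in a
graph with edge set `E` (the trivial path at `a` when `l = []`). -/
def IsPath (E : Set (AGVert × AGVert)) (a : AGVert) (l : List AGVert) : Prop :=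
  List.Chain (fun x y => (x, y) ∈ E) a l

/-- The terminal vertex of the path with vertex sequence `a :: l`. -/
def pathLast (a : AGVert) (l : List AGVert) : AGVert :=
  (a :: l).getLast (List.cons_ne_nil a l)

/-- The action graph `A k`, given by its set of vertices together with its set of
(nontrivial, directed) edges.  `A 0` has one vertex (labeled 0) and no nontrivial
edges; `A (k+1)` is obtained from `A k` by adjoining, for each directed path
(including trivial ones) in `A k` whose terminal vertex is labeled `k`, a new vertex
labeled `k+1` and a new edge from the initial vertex of the path to the new vertex. -/
def actionGraph : ℕ → Set AGVert × Set (AGVert × AGVert)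
  | 0 => ({AGVert.root}, ∅)
  | k + 1 =>
    let G := actionGraph k
    (G.1 ∪ { w | ∃ a l, a ∈ G.1 ∧ IsPath G.2 a l ∧ (pathLast a l).label = k ∧
        w = AGVert.node (k + 1) a l },
     G.2 ∪ { e | ∃ a l, a ∈ G.1 ∧ IsPath G.2 a l ∧ (pathLast a l).label = k ∧
        e = (a, AGVert.node (k + 1) a l) })

/-- For every vertex `v` of `A k` there is exactly one directed path in `A k` from the
vertex labeled 0 to `v`. -/
lemma pathLast_concat (a x : AGVert) (m : List AGVert) : pathLast a (m ++ [x]) = x := by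
  simp [pathLast]

lemma chain_concat' {α : Type*} {R : α → α → Prop} :
    ∀ {m : List α} {a x : α}, List.Chain R a (m ++ [x]) ↔
      List.Chain R a m ∧ R ((a :: m).getLast (List.cons_ne_nil a m)) x := by
  intro m
  induction m with
  | nil => intro a x; simp [List.Chain]
  | cons b m ih =>
      intro a x
      have ih' := @ih b x
      simp only [List.Chain] at ih' ⊢
      simp only [List.cons_append, ih', List.chain_cons, ih, List.getLast_cons (List.cons_ne_nil b m)]
      tauto

lemma edge_shape : ∀ k {x y : AGVert}, (x, y) ∈ (actionGraph k).2 →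
    ∃ j a l, j ≤ k ∧ y = AGVert.node j a l ∧ x = a := by
  intro k
  induction k with
  | zero => intro x y h; exact absurd h (by simp [actionGraph])
  | succ k ih =>
      intro x y h
      rcases h with h | ⟨a, l, _, _, _, he⟩
      · obtain ⟨j, a, l, hj, h1, h2⟩ := ih h
        exact ⟨j, a, l, Nat.le_succ_of_le hj, h1, h2⟩
      · exact ⟨k + 1, a, l, le_rfl, by simpa using congrArg Prod.snd he,
          by simpa using congrArg Prod.fst he⟩

lemma label_zero : ∀ k {v : AGVert}, v ∈ (actionGraph k).1 → v.label = 0 → v = AGVert.root := by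
  intro k
  induction k with
  | zero => intro v h _; simpa [actionGraph] using h
  | succ k ih =>
      intro v h hl
      rcases h with h | ⟨a, l, _, _, _, he⟩
      · exact ih h hl
      · subst he; simp [AGVert.label] at hl

lemma mono_V (k : ℕ) : (actionGraph k).1 ⊆ (actionGraph (k+1)).1 := fun _ h => Or.inl h
lemma mono_E (k : ℕ) : (actionGraph k).2 ⊆ (actionGraph (k+1)).2 := fun _ h => Or.inl h

lemma root_mem : ∀ k, AGVert.root ∈ (actionGraph k).1 := by
  intro k; induction k with
  | zero => simp [actionGraph]
  | succ k ih => exact mono_V k ih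

lemma exists_path : ∀ k {v : AGVert}, v ∈ (actionGraph k).1 →
    ∃ l, IsPath (actionGraph k).2 AGVert.root l ∧ pathLast AGVert.root l = v := by
  intro k
  induction k with
  | zero =>
      intro v h
      have : v = AGVert.root := by simpa [actionGraph] using h
      subst this
      exact ⟨[], List.Chain.nil, rfl⟩
  | succ k ih =>
      intro v h
      rcases h with h | ⟨a, l, ha, hp, hlbl, he⟩
      · rcases ih h with ⟨m, hm, hlast⟩
        exact ⟨m, List.Chain.imp (fun x y hxy => mono_E k hxy) hm, hlast⟩
      · rcases ih ha with ⟨m, hm, hlast⟩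
        subst he
        refine ⟨m ++ [AGVert.node (k+1) a l], ?_, pathLast_concat _ _ _⟩
        rw [IsPath, chain_concat']
        refine ⟨List.Chain.imp (fun x y hxy => mono_E k hxy) hm, ?_⟩
        have : (AGVert.root :: m).getLast (List.cons_ne_nil _ m) = a := hlast
        rw [this]
        exact Or.inr ⟨a, l, ha, hp, hlbl, rfl⟩

lemma pred_unique : ∀ k {x x' y : AGVert}, (x, y) ∈ (actionGraph k).2 →
    (x', y) ∈ (actionGraph k).2 → x = x' := by
  intro k
  induction k with
  | zero => intro x x' y h; exact absurd h (by simp [actionGraph])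
  | succ k ih =>
      intro x x' y h h'
      rcases h with h1 | ⟨a, l, _, _, _, he⟩
      · rcases h' with h2 | ⟨a', l', _, _, _, he'⟩
        · exact ih h1 h2
        · injection he' with hx hy
          subst hx; subst hy
          obtain ⟨j, b, m, hj, hy, _⟩ := edge_shape k h1
          injection hy with h1 h2 h3
          omega
      · injection he with hx hy
        subst hx; subst hy
        rcases h' with h2 | ⟨a', l', _, _, _, he'⟩
        · obtain ⟨j, b, m, hj, hy, _⟩ := edge_shape k h2
          injection hy with h1 h2 h3
          omega
        · injection he' with hx' hy'
          injection hy' with e1 e2 e3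
          subst hx'; exact e2

lemma no_edge_to_root (k : ℕ) (x : AGVert) : (x, AGVert.root) ∉ (actionGraph k).2 := by
  intro h
  obtain ⟨j, a, l, _, hy, _⟩ := edge_shape k h
  exact AGVert.noConfusion hy

lemma path_unique (k : ℕ) : ∀ (n : ℕ) (l l' : List AGVert), l.length ≤ n →
    IsPath (actionGraph k).2 AGVert.root l → IsPath (actionGraph k).2 AGVert.root l' →
    pathLast AGVert.root l = pathLast AGVert.root l' → l = l' := by
  intro n
  induction n with
  | zero =>
      intro l l' hn hl hl' hlast
      have : l = [] := List.eq_nil_of_length_eq_zero (Nat.le_zero.mp hn)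
      subst this
      rcases List.eq_nil_or_concat l' with rfl | ⟨m', x, rfl⟩
      · rfl
      · simp only [List.concat_eq_append] at hl' hlast ⊢
        rw [pathLast_concat] at hlast
        rw [IsPath, chain_concat'] at hl'
        exact absurd (hlast ▸ hl'.2) (no_edge_to_root k _)
  | succ n ih =>
      intro l l' hn hl hl' hlast
      rcases List.eq_nil_or_concat l with rfl | ⟨m, x, rfl⟩
      · rcases List.eq_nil_or_concat l' with rfl | ⟨m', x', rfl⟩
        · rfl
        · simp only [List.concat_eq_append] at hl' hlast ⊢
          rw [pathLast_concat] at hlast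
          rw [IsPath, chain_concat'] at hl'
          exact absurd (hlast ▸ hl'.2) (no_edge_to_root k _)
      · rcases List.eq_nil_or_concat l' with rfl | ⟨m', x', rfl⟩
        · simp only [List.concat_eq_append] at hl hlast hn ⊢
          rw [pathLast_concat] at hlast
          rw [IsPath, chain_concat'] at hl
          exact absurd (hlast ▸ hl.2) (no_edge_to_root k _)
        · simp only [List.concat_eq_append] at hl hl' hlast hn ⊢
          rw [pathLast_concat, pathLast_concat] at hlast
          subst hlast
          rw [IsPath, chain_concat'] at hl hl'
          have hu : (AGVert.root :: m).getLast (List.cons_ne_nil _ m) =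
              (AGVert.root :: m').getLast (List.cons_ne_nil _ m') :=
            pred_unique k hl.2 hl'.2
          have hlen : m.length ≤ n := by
            simp at hn; omega
          rw [ih m m' hlen hl.1 hl'.1 hu]

theorem stmt_3 (k : ℕ) (v : AGVert) (hv : v ∈ (actionGraph k).1) :
    ∃! p : AGVert × List AGVert, p.1 ∈ (actionGraph k).1 ∧
      IsPath (actionGraph k).2 p.1 p.2 ∧ p.1.label = 0 ∧ pathLast p.1 p.2 = v := by
  obtain ⟨l, hl, hlast⟩ := exists_path k hv
  refine ⟨(AGVert.root, l), ⟨root_mem k, hl, rfl, hlast⟩, ?_⟩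
  rintro ⟨b, l'⟩ ⟨hb, hl', hlbl, hlast'⟩
  have hbr : b = AGVert.root := label_zero k hb hlbl
  subst hbr
  have : l' = l := path_unique k l'.length l' l le_rfl hl' hl (hlast'.trans hlast.symm)
  simp [this]
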